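/- Let B be the set of hollow bistochastic n×n matrices, ε > 0, and π*(C) the minimizer over B of π ↦ ⟨C, π⟩ + (ε/2)‖π‖_F². If C' = C + u 1ⁿᵀ + 1ⁿ vᵀ + D + E with u, v ∈ ℝⁿ, D diagonal, and E an arbitrary n×n matrix, then ‖π*(C') − π*(C)‖_F ≤ (1/ε)‖E‖_F. -/

import Mathlib

open Finset

/-- The set of hollow bistochastic n×n matrices. -/
def hollowBistochastic (n : ℕ) : Set (Matrix (Fin n) (Fin n) ℝ) :=
  {π | (∀ i j, 0 ≤ π i j) ∧ (∀ i, ∑ j, π i j = 1) ∧ (∀ j, ∑ i, π i j = 1) ∧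
    ∀ i, π i i = 0}

private lemma sum3 {n : ℕ} (f g k : Fin n → Fin n → ℝ)
    (h : ∀ i j, f i j + g i j + k i j = 0) :
    (∑ i, ∑ j, f i j) + (∑ i, ∑ j, g i j) + (∑ i, ∑ j, k i j) = 0 := by
  rw [← Finset.sum_add_distrib, ← Finset.sum_add_distrib]
  refine Finset.sum_eq_zero fun i _ => ?_
  rw [← Finset.sum_add_distrib, ← Finset.sum_add_distrib]
  exact Finset.sum_eq_zero fun j _ => h i j

private lemma limit_arg {L Q : ℝ} (hQ : 0 ≤ Q)
    (key : ∀ t : ℝ, 0 < t → t ≤ 1 → 0 ≤ t * L + t ^ 2 * Q) : 0 ≤ L := by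
  by_contra hL
  push_neg at hL
  have hd : 0 < -L / (2 * Q + 1) := div_pos (by linarith) (by linarith)
  set t := min 1 (-L / (2 * Q + 1)) with htdef
  have ht0 : 0 < t := lt_min one_pos hd
  have ht1 : t ≤ 1 := min_le_left _ _
  have h2 : t ≤ -L / (2 * Q + 1) := min_le_right _ _
  have h3 : t * (2 * Q + 1) ≤ -L := (le_div_iff₀ (by linarith : (0:ℝ) < 2 * Q + 1)).mp h2
  have hk := key t ht0 ht1
  nlinarith [mul_le_mul_of_nonneg_left h3 ht0.le, mul_nonneg (mul_nonneg ht0.le ht0.le) hQ,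
    mul_pos ht0 ht0]

private lemma var_ineq {n : ℕ} {ε : ℝ} (hε : 0 < ε)
    (A π ρ : Matrix (Fin n) (Fin n) ℝ)
    (hπ : π ∈ hollowBistochastic n) (hρ : ρ ∈ hollowBistochastic n)
    (hmin : IsMinOn (fun σ : Matrix (Fin n) (Fin n) ℝ =>
        (∑ i, ∑ j, A i j * σ i j) + ε / 2 * ∑ i, ∑ j, (σ i j) ^ 2)
      (hollowBistochastic n) π) :
    0 ≤ (∑ i, ∑ j, A i j * (ρ i j - π i j)) +
        ε * ∑ i, ∑ j, π i j * (ρ i j - π i j) := by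
  obtain ⟨hρ0, hρr, hρc, hρd⟩ := hρ
  obtain ⟨hπ0, hπr, hπc, hπd⟩ := hπ
  have hQ : 0 ≤ ε / 2 * ∑ i, ∑ j, (ρ i j - π i j) ^ 2 := by
    apply mul_nonneg (by linarith)
    exact Finset.sum_nonneg fun i _ => Finset.sum_nonneg fun j _ => sq_nonneg _
  refine limit_arg hQ fun t ht0 ht1 => ?_
  set σ : Matrix (Fin n) (Fin n) ℝ := fun i j => π i j + t * (ρ i j - π i j) with hσ
  have hmem : σ ∈ hollowBistochastic n := by
    refine ⟨fun i j => ?_, fun i => ?_, fun j => ?_, fun i => ?_⟩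
    · have := hρ0 i j; have := hπ0 i j
      simp only [hσ]; nlinarith
    · simp only [hσ]
      rw [Finset.sum_add_distrib, ← Finset.mul_sum, Finset.sum_sub_distrib, hπr i, hρr i]
      ring
    · simp only [hσ]
      rw [Finset.sum_add_distrib, ← Finset.mul_sum, Finset.sum_sub_distrib, hπc j, hρc j]
      ring
    · simp only [hσ, hπd i, hρd i]; ring
  have hle := isMinOn_iff.mp hmin σ hmem
  have e1 : (∑ i, ∑ j, A i j * σ i j)
      = (∑ i, ∑ j, A i j * π i j) + t * ∑ i, ∑ j, A i j * (ρ i j - π i j) := by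
    rw [Finset.mul_sum, ← Finset.sum_add_distrib]
    refine Finset.sum_congr rfl fun i _ => ?_
    rw [Finset.mul_sum, ← Finset.sum_add_distrib]
    refine Finset.sum_congr rfl fun j _ => ?_
    simp only [hσ]; ring
  have e2 : (∑ i, ∑ j, (σ i j) ^ 2)
      = (∑ i, ∑ j, (π i j) ^ 2) + (2 * t) * (∑ i, ∑ j, π i j * (ρ i j - π i j))
        + t ^ 2 * (∑ i, ∑ j, (ρ i j - π i j) ^ 2) := by
    rw [Finset.mul_sum, Finset.mul_sum, ← Finset.sum_add_distrib, ← Finset.sum_add_distrib]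
    refine Finset.sum_congr rfl fun i _ => ?_
    rw [Finset.mul_sum, Finset.mul_sum, ← Finset.sum_add_distrib, ← Finset.sum_add_distrib]
    refine Finset.sum_congr rfl fun j _ => ?_
    simp only [hσ]; ring
  simp only [e1, e2] at hle
  nlinarith [hle]

/-- if `C' = C + u 1ᵀ + 1 vᵀ + D + E` with `D` diagonal, then the regularised
self-transport minimizers for `C'` and `C` differ by at most `(1/ε)‖E‖_F` in Frobenius norm. -/
theorem quadratic_reg_stability (n : ℕ) (hn : 2 ≤ n) (ε : ℝ) (hε : 0 < ε)
    (C C' D E : Matrix (Fin n) (Fin n) ℝ) (u v : Fin n → ℝ)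
    (hD : ∀ i j, i ≠ j → D i j = 0)
    (hC' : ∀ i j, C' i j = C i j + u i + v j + D i j + E i j)
    (πC πC' : Matrix (Fin n) (Fin n) ℝ)
    (hπC : πC ∈ hollowBistochastic n) (hπC' : πC' ∈ hollowBistochastic n)
    (hminC : IsMinOn (fun ρ : Matrix (Fin n) (Fin n) ℝ =>
        (∑ i, ∑ j, C i j * ρ i j) + ε / 2 * ∑ i, ∑ j, (ρ i j) ^ 2)
      (hollowBistochastic n) πC)
    (hminC' : IsMinOn (fun ρ : Matrix (Fin n) (Fin n) ℝ =>
        (∑ i, ∑ j, C' i j * ρ i j) + ε / 2 * ∑ i, ∑ j, (ρ i j) ^ 2)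
      (hollowBistochastic n) πC') :
    Real.sqrt (∑ i, ∑ j, (πC' i j - πC i j) ^ 2) ≤
      (1 / ε) * Real.sqrt (∑ i, ∑ j, (E i j) ^ 2) := by
  -- the objective with C' differs from that with C+E by a constant on B
  have shift : ∀ ρ ∈ hollowBistochastic n,
      (∑ i, ∑ j, C' i j * ρ i j)
        = (∑ i, ∑ j, (C i j + E i j) * ρ i j) + ((∑ i, u i) + (∑ j, v j)) := by
    intro ρ hρ
    obtain ⟨hρ0, hρr, hρc, hρd⟩ := hρ
    have hu : ∑ i, ∑ j, u i * ρ i j = ∑ i, u i := by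
      refine Finset.sum_congr rfl fun i _ => ?_
      rw [← Finset.mul_sum, hρr i, mul_one]
    have hv : ∑ i, ∑ j, v j * ρ i j = ∑ j, v j := by
      rw [Finset.sum_comm]
      refine Finset.sum_congr rfl fun j _ => ?_
      rw [← Finset.mul_sum, hρc j, mul_one]
    have hd : ∑ i, ∑ j, D i j * ρ i j = 0 := by
      refine Finset.sum_eq_zero fun i _ => Finset.sum_eq_zero fun j _ => ?_
      rcases eq_or_ne i j with rfl | hij
      · rw [hρd i, mul_zero]
      · rw [hD i j hij, zero_mul]
    have h1 : (∑ i, ∑ j, C' i j * ρ i j)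
        = ∑ i, ∑ j, ((C i j + E i j) * ρ i j + u i * ρ i j + v j * ρ i j + D i j * ρ i j) := by
      refine Finset.sum_congr rfl fun i _ => Finset.sum_congr rfl fun j _ => ?_
      rw [hC' i j]; ring
    rw [h1]
    simp only [Finset.sum_add_distrib]
    rw [hu, hv, hd]
    ring
  have hmin2 : IsMinOn (fun ρ : Matrix (Fin n) (Fin n) ℝ =>
      (∑ i, ∑ j, (C i j + E i j) * ρ i j) + ε / 2 * ∑ i, ∑ j, (ρ i j) ^ 2)
      (hollowBistochastic n) πC' := by
    rw [isMinOn_iff]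
    intro ρ hρ
    have h1 := isMinOn_iff.mp hminC' ρ hρ
    have s1 := shift ρ hρ
    have s2 := shift πC' hπC'
    linarith
  have I1 := var_ineq hε C πC πC' hπC hπC' hminC
  have I2 := var_ineq hε (fun i j => C i j + E i j) πC' πC hπC' hπC hmin2
  have hA : (∑ i, ∑ j, C i j * (πC' i j - πC i j))
      + (∑ i, ∑ j, (C i j + E i j) * (πC i j - πC' i j))
      + (∑ i, ∑ j, E i j * (πC' i j - πC i j)) = 0 :=
    sum3 _ _ _ (fun i j => by ring)
  have hB : (∑ i, ∑ j, πC i j * (πC' i j - πC i j))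
      + (∑ i, ∑ j, πC' i j * (πC i j - πC' i j))
      + (∑ i, ∑ j, (πC' i j - πC i j) ^ 2) = 0 :=
    sum3 _ _ _ (fun i j => by ring)
  have hB' : ε * (∑ i, ∑ j, πC i j * (πC' i j - πC i j))
      + ε * (∑ i, ∑ j, πC' i j * (πC i j - πC' i j))
      + ε * (∑ i, ∑ j, (πC' i j - πC i j) ^ 2) = 0 := by linear_combination ε * hB
  have hkey : ε * (∑ i, ∑ j, (πC' i j - πC i j) ^ 2)
      ≤ -(∑ i, ∑ j, E i j * (πC' i j - πC i j)) := by linarith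
  -- Cauchy–Schwarz
  set s := ∑ i, ∑ j, (πC' i j - πC i j) ^ 2 with hs
  set b2 := ∑ i, ∑ j, (E i j) ^ 2 with hb2
  have hsnn : 0 ≤ s := Finset.sum_nonneg fun i _ => Finset.sum_nonneg fun j _ => sq_nonneg _
  have hb2nn : 0 ≤ b2 := Finset.sum_nonneg fun i _ => Finset.sum_nonneg fun j _ => sq_nonneg _
  have hcs : -(∑ i, ∑ j, E i j * (πC' i j - πC i j)) ≤ Real.sqrt b2 * Real.sqrt s := by
    have hprod : (∑ p : Fin n × Fin n, (-(E p.1 p.2)) * (πC' p.1 p.2 - πC p.1 p.2))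
        = -(∑ i, ∑ j, E i j * (πC' i j - πC i j)) := by
      rw [Fintype.sum_prod_type]
      rw [← Finset.sum_neg_distrib]
      refine Finset.sum_congr rfl fun i _ => ?_
      rw [← Finset.sum_neg_distrib]
      exact Finset.sum_congr rfl fun j _ => by ring
    have hsq := Finset.sum_mul_sq_le_sq_mul_sq Finset.univ
      (fun p : Fin n × Fin n => -(E p.1 p.2)) (fun p : Fin n × Fin n => πC' p.1 p.2 - πC p.1 p.2)
    have hE2 : (∑ p : Fin n × Fin n, (-(E p.1 p.2)) ^ 2) = b2 := by
      rw [Fintype.sum_prod_type]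
      exact Finset.sum_congr rfl fun i _ => Finset.sum_congr rfl fun j _ => by ring
    have hH2 : (∑ p : Fin n × Fin n, (πC' p.1 p.2 - πC p.1 p.2) ^ 2) = s := by
      rw [Fintype.sum_prod_type, hs]
    rw [hE2, hH2, hprod] at hsq
    set X := -(∑ i, ∑ j, E i j * (πC' i j - πC i j)) with hX
    calc X ≤ |X| := le_abs_self X
    _ = Real.sqrt (X ^ 2) := (Real.sqrt_sq_eq_abs X).symm
    _ ≤ Real.sqrt (b2 * s) := Real.sqrt_le_sqrt hsq
    _ = Real.sqrt b2 * Real.sqrt s := Real.sqrt_mul hb2nn s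
  have hfin : ε * s ≤ Real.sqrt b2 * Real.sqrt s := le_trans hkey hcs
  have hssq : Real.sqrt s ^ 2 = s := Real.sq_sqrt hsnn
  rcases eq_or_lt_of_le (Real.sqrt_nonneg s) with h0 | hpos
  · rw [← h0]
    positivity
  · have h5 : (ε * Real.sqrt s) * Real.sqrt s ≤ Real.sqrt b2 * Real.sqrt s := by
      nlinarith [hfin, hssq]
    have h6 : ε * Real.sqrt s ≤ Real.sqrt b2 := le_of_mul_le_mul_right h5 hpos
    have h7 : (1 / ε) * Real.sqrt b2 = Real.sqrt b2 / ε := by ring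
    rw [h7, le_div_iff₀ hε]
    linarith
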